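/- Let |Ψ_s⟩ be an n-partite state with full local ranks and suppose a local operator A = A_1 ⊗ ... ⊗ A_n maps g|Ψ_s⟩ to a multiple of h|Ψ_s⟩, where g = g_1⊗...⊗g_n and h = h_1⊗...⊗h_n are invertible local operators. Then A is of the form h_1 S^(1) g_1^{-1} ⊗ ... ⊗ h_n S^(n) g_n^{-1} for some S = S^(1)⊗...⊗S^(n) in the local stabilizer of |Ψ_s⟩ (up to an overall scalar). -/

import Mathlib

open Matrix

noncomputable section

/-- Action of a local (product) operator `A = A_1 ⊗ ... ⊗ A_n` on a vector of
`⊗_i ℂ^{d_i}`, represented as a function `(∀ i, Fin (d i)) → ℂ`. -/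
def applyLocal {n : ℕ} {d : Fin n → ℕ} (A : ∀ i, Matrix (Fin (d i)) (Fin (d i)) ℂ)
    (ψ : (∀ i, Fin (d i)) → ℂ) : (∀ i, Fin (d i)) → ℂ :=
  fun x => ∑ y : ∀ i, Fin (d i), (∏ i, A i (x i) (y i)) * ψ y

/-- The single-party reduced density matrix of `ψ` at site `i`. -/
def reduced {n : ℕ} {d : Fin n → ℕ} (ψ : (∀ i, Fin (d i)) → ℂ) (i : Fin n) :
    Matrix (Fin (d i)) (Fin (d i)) ℂ :=
  fun a b => ∑ x : ∀ j, Fin (d j),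
    if x i = a then ψ x * (starRingEnd ℂ) (ψ (Function.update x i b)) else 0

section AuxLemmas

set_option linter.unnecessarySeqFocus false

variable {n : ℕ} {d : Fin n → ℕ}

lemma applyLocal_smul_vec (A : ∀ i, Matrix (Fin (d i)) (Fin (d i)) ℂ) (c : ℂ)
    (ψ : (∀ i, Fin (d i)) → ℂ) : applyLocal A (c • ψ) = c • applyLocal A ψ := by
  funext x
  simp only [applyLocal, Pi.smul_apply, smul_eq_mul, Finset.mul_sum]
  exact Finset.sum_congr rfl fun y _ => by ring

lemma applyLocal_one (ψ : (∀ i, Fin (d i)) → ℂ) :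
    applyLocal (fun i => (1 : Matrix (Fin (d i)) (Fin (d i)) ℂ)) ψ = ψ := by
  funext x
  have hprod : ∀ y : ∀ i, Fin (d i),
      (∏ i, (1 : Matrix (Fin (d i)) (Fin (d i)) ℂ) (x i) (y i)) = if y = x then 1 else 0 := by
    intro y
    by_cases hxy : y = x
    · subst hxy; simp [Matrix.one_apply]
    · obtain ⟨i, hi⟩ := Function.ne_iff.mp hxy
      rw [if_neg hxy]
      exact Finset.prod_eq_zero (Finset.mem_univ i) (by simp [Matrix.one_apply, Ne.symm hi])
  simp only [applyLocal, hprod]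
  simp

lemma applyLocal_mul (X Y : ∀ i, Matrix (Fin (d i)) (Fin (d i)) ℂ)
    (ψ : (∀ i, Fin (d i)) → ℂ) :
    applyLocal (fun i => X i * Y i) ψ = applyLocal X (applyLocal Y ψ) := by
  funext x
  simp only [applyLocal, Matrix.mul_apply, Finset.mul_sum]
  rw [Finset.sum_comm]
  refine Finset.sum_congr rfl fun z _ => ?_
  rw [Finset.prod_univ_sum (fun _ => Finset.univ) (fun i b => X i (x i) b * Y i b (z i))]
  rw [Fintype.piFinset_univ, Finset.sum_mul]
  exact Finset.sum_congr rfl fun y _ => by rw [Finset.prod_mul_distrib]; ring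

lemma applyLocal_smul (ν : Fin n → ℂ) (X : ∀ i, Matrix (Fin (d i)) (Fin (d i)) ℂ)
    (ψ : (∀ i, Fin (d i)) → ℂ) :
    applyLocal (fun i => ν i • X i) ψ = (∏ i, ν i) • applyLocal X ψ := by
  funext x
  simp only [applyLocal, Matrix.smul_apply, smul_eq_mul, Pi.smul_apply, Finset.mul_sum,
    Finset.prod_mul_distrib]
  exact Finset.sum_congr rfl fun y _ => by ring

lemma sum_update (i : Fin n) (a : Fin (d i)) (F : (∀ j, Fin (d j)) → ℂ) :
    ∑ x : ∀ j, Fin (d j), F (Function.update x i a)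
      = (d i : ℂ) * ∑ x : ∀ j, Fin (d j), if x i = a then F x else 0 := by
  classical
  have key : ∀ t : Fin (d i),
      (∑ x ∈ Finset.univ.filter (fun x : ∀ j, Fin (d j) => x i = t),
        F (Function.update x i a))
        = ∑ x ∈ Finset.univ.filter (fun x : ∀ j, Fin (d j) => x i = a), F x := by
    intro t
    refine Finset.sum_nbij' (fun x => Function.update x i a)
      (fun x => Function.update x i t) ?_ ?_ ?_ ?_ ?_
    · intro x hx; simp
    · intro x hx; simp
    · intro x hx
      simp only [Finset.mem_filter, Finset.mem_univ, true_and] at hx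
      rw [Function.update_idem, ← hx, Function.update_eq_self]
    · intro x hx
      simp only [Finset.mem_filter, Finset.mem_univ, true_and] at hx
      rw [Function.update_idem, ← hx, Function.update_eq_self]
    · intro x hx; rfl
  calc ∑ x : ∀ j, Fin (d j), F (Function.update x i a)
      = ∑ t : Fin (d i), ∑ x ∈ Finset.univ.filter (fun x : ∀ j, Fin (d j) => x i = t),
          F (Function.update x i a) := by
        rw [Finset.sum_fiberwise Finset.univ (fun x => x i) (fun x => F (Function.update x i a))]
    _ = ∑ t : Fin (d i), ∑ x ∈ Finset.univ.filter (fun x : ∀ j, Fin (d j) => x i = a), F x := by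
        exact Finset.sum_congr rfl fun t _ => key t
    _ = (d i : ℂ) * ∑ x : ∀ j, Fin (d j), if x i = a then F x else 0 := by
        rw [Finset.sum_const, ← Finset.sum_filter]
        simp [nsmul_eq_mul]

lemma isUnit_of_applyLocal_smul (ψ : (∀ j, Fin (d j)) → ℂ)
    (B : ∀ i, Matrix (Fin (d i)) (Fin (d i)) ℂ) (c : ℂ) (hc : c ≠ 0) (i : Fin n)
    (hdi : 0 < d i) (hred : IsUnit (reduced ψ i))
    (heq : applyLocal B ψ = c • ψ) : IsUnit (B i) := by
  classical
  set M : Matrix (Fin (d i)) (∀ j, Fin (d j)) ℂ :=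
    Matrix.of (fun a x => ψ (Function.update x i a)) with hM
  set C : Matrix (∀ j, Fin (d j)) (∀ j, Fin (d j)) ℂ :=
    Matrix.of (fun x y => ∏ j ∈ Finset.univ.erase i, B j (x j) (y j)) with hC
  have claim1 : M * Mᴴ = (d i : ℂ) • reduced ψ i := by
    ext a b
    rw [Matrix.mul_apply]
    have : ∀ x : ∀ j, Fin (d j), M a x * Mᴴ x b
        = (fun z => ψ z * (starRingEnd ℂ) (ψ (Function.update z i b))) (Function.update x i a) := by
      intro x
      simp only [hM, Matrix.conjTranspose_apply, Matrix.of_apply, Function.update_idem,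
        starRingEnd_apply]
    rw [Finset.sum_congr rfl fun x _ => this x,
      sum_update i a (fun z => ψ z * (starRingEnd ℂ) (ψ (Function.update z i b)))]
    simp [reduced, Matrix.smul_apply, smul_eq_mul]
  have hprodsplit : ∀ (a : Fin (d i)) (x y : ∀ j, Fin (d j)),
      (∏ j, B j (Function.update x i a j) (y j))
        = B i a (y i) * ∏ j ∈ Finset.univ.erase i, B j (x j) (y j) := by
    intro a x y
    rw [← Finset.mul_prod_erase Finset.univ _ (Finset.mem_univ i), Function.update_self]
    congr 1
    refine Finset.prod_congr rfl fun j hj => ?_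
    rw [Function.update_of_ne (Finset.ne_of_mem_erase hj)]
  have claim2 : B i * (M * Cᵀ) = ((d i : ℂ) * c) • M := by
    ext a x
    rw [Matrix.mul_apply]
    have inner : ∀ b : Fin (d i), (M * Cᵀ) b x
        = ∑ y : ∀ j, Fin (d j), ψ (Function.update y i b)
            * ∏ j ∈ Finset.univ.erase i, B j (x j) (y j) := by
      intro b
      rw [Matrix.mul_apply]
      rfl
    have step : ∀ b : Fin (d i),
        (∑ y : ∀ j, Fin (d j), ψ (Function.update y i b)
            * ∏ j ∈ Finset.univ.erase i, B j (x j) (y j))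
          = (d i : ℂ) * ∑ y : ∀ j, Fin (d j),
              if y i = b then ψ y * ∏ j ∈ Finset.univ.erase i, B j (x j) (y j) else 0 := by
      intro b
      have hP : ∀ y : ∀ j, Fin (d j),
          (∏ j ∈ Finset.univ.erase i, B j (x j) (Function.update y i b j))
            = ∏ j ∈ Finset.univ.erase i, B j (x j) (y j) := by
        intro y
        refine Finset.prod_congr rfl fun j hj => ?_
        rw [Function.update_of_ne (Finset.ne_of_mem_erase hj)]
      have := sum_update i b (fun z => ψ z * ∏ j ∈ Finset.univ.erase i, B j (x j) (z j))
      rw [← this]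
      exact Finset.sum_congr rfl fun y _ => by rw [hP y]
    calc (∑ b, B i a b * (M * Cᵀ) b x)
        = ∑ b, B i a b * ((d i : ℂ) * ∑ y : ∀ j, Fin (d j),
            if y i = b then ψ y * ∏ j ∈ Finset.univ.erase i, B j (x j) (y j) else 0) := by
          exact Finset.sum_congr rfl fun b _ => by rw [inner b, step b]
      _ = (d i : ℂ) * ∑ b, ∑ y : ∀ j, Fin (d j),
            if y i = b then B i a b * (ψ y * ∏ j ∈ Finset.univ.erase i, B j (x j) (y j))
            else 0 := by
          simp only [Finset.mul_sum]
          refine Finset.sum_congr rfl fun b _ => Finset.sum_congr rfl fun y _ => ?_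
          by_cases hy : y i = b <;> simp [hy] <;> ring
      _ = (d i : ℂ) * ∑ y : ∀ j, Fin (d j),
            B i a (y i) * (ψ y * ∏ j ∈ Finset.univ.erase i, B j (x j) (y j)) := by
          congr 1
          rw [Finset.sum_comm]
          refine Finset.sum_congr rfl fun y _ => ?_
          simp
      _ = (d i : ℂ) * (c * ψ (Function.update x i a)) := by
          congr 1
          have happ := congrFun heq (Function.update x i a)
          simp only [applyLocal, Pi.smul_apply, smul_eq_mul] at happ
          rw [← happ]
          refine Finset.sum_congr rfl fun y _ => ?_
          rw [hprodsplit a x y]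
          ring
      _ = (((d i : ℂ) * c) • M) a x := by simp [hM, Matrix.smul_apply, smul_eq_mul]; ring
  have h3 : B i * (M * Cᵀ * Mᴴ) = (((d i : ℂ)^2 * c) • reduced ψ i) := by
    rw [← Matrix.mul_assoc, claim2, Matrix.smul_mul, claim1, smul_smul]
    ring_nf
  have hdC : (d i : ℂ) ≠ 0 := Nat.cast_ne_zero.mpr hdi.ne'
  have hu : IsUnit (((d i : ℂ)^2 * c) • reduced ψ i) := by
    rw [Matrix.isUnit_iff_isUnit_det, Matrix.det_smul]
    exact (IsUnit.pow _ (isUnit_iff_ne_zero.mpr (by simp [hdC, hc]))).mul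
      ((Matrix.isUnit_iff_isUnit_det _).mp hred)
  rw [← h3, Matrix.isUnit_iff_isUnit_det, Matrix.det_mul] at hu
  rw [Matrix.isUnit_iff_isUnit_det]
  exact isUnit_of_mul_isUnit_left hu

end AuxLemmas

/-- if a local operator `A` maps `g|Ψ_s⟩` to a multiple of `h|Ψ_s⟩`,
where `|Ψ_s⟩` has full local ranks and `g, h` are invertible local operators, then
`A = h_1 S^(1) g_1⁻¹ ⊗ ⋯ ⊗ h_n S^(n) g_n⁻¹` (up to an overall scalar, distributed as
local scalars `c i`) for some product operator `S` in the local stabilizer of `|Ψ_s⟩`. -/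
theorem stmt0 {n : ℕ} {d : Fin n → ℕ}
    (Ψs : (∀ i, Fin (d i)) → ℂ)
    (hfull : ∀ i, IsUnit (reduced Ψs i))
    (A g h : ∀ i, Matrix (Fin (d i)) (Fin (d i)) ℂ)
    (hg : ∀ i, IsUnit (g i)) (hh : ∀ i, IsUnit (h i))
    (c : ℂ) (hc : c ≠ 0)
    (hmap : applyLocal A (applyLocal g Ψs) = c • applyLocal h Ψs) :
    ∃ S : ∀ i, Matrix (Fin (d i)) (Fin (d i)) ℂ,
      (∀ i, IsUnit (S i)) ∧ applyLocal S Ψs = Ψs ∧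
      ∃ μ : Fin n → ℂ, (∀ i, μ i ≠ 0) ∧
        ∀ i, A i = μ i • (h i * S i * (g i)⁻¹) := by
  classical
  by_cases hpos : ∀ i, 0 < d i
  · by_cases hn : n = 0
    · subst hn
      exact ⟨fun i => 1, fun i => i.elim0, applyLocal_one Ψs, fun i => 1,
        fun i => i.elim0, fun i => i.elim0⟩
    · -- main case
      set B : ∀ i, Matrix (Fin (d i)) (Fin (d i)) ℂ :=
        fun i => (h i)⁻¹ * (A i * g i) with hB
      have hhd : ∀ i, IsUnit (h i).det := fun i => (Matrix.isUnit_iff_isUnit_det _).mp (hh i)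
      have hgd : ∀ i, IsUnit (g i).det := fun i => (Matrix.isUnit_iff_isUnit_det _).mp (hg i)
      have hBmap : applyLocal B Ψs = c • Ψs := by
        have h1 : applyLocal (fun i => A i * g i) Ψs = c • applyLocal h Ψs := by
          rw [applyLocal_mul]; exact hmap
        have h2 := applyLocal_mul (fun i => (h i)⁻¹) (fun i => A i * g i) Ψs
        rw [h1, applyLocal_smul_vec, ← applyLocal_mul] at h2
        have h3 : (fun i => (h i)⁻¹ * h i)
            = fun i => (1 : Matrix (Fin (d i)) (Fin (d i)) ℂ) :=
          funext fun i => Matrix.nonsing_inv_mul _ (hhd i)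
        rw [h3, applyLocal_one] at h2
        exact h2
      have hBunit : ∀ i, IsUnit (B i) :=
        fun i => isUnit_of_applyLocal_smul Ψs B c hc i (hpos i) (hfull i) hBmap
      set i₀ : Fin n := ⟨0, Nat.pos_of_ne_zero hn⟩ with hi₀
      set ν : Fin n → ℂ := fun i => if i = i₀ then c⁻¹ else 1 with hν
      have hνne : ∀ i, ν i ≠ 0 := by
        intro i
        simp only [hν]
        split
        · exact inv_ne_zero hc
        · exact one_ne_zero
      have hνprod : ∏ i, ν i = c⁻¹ := by
        simp [hν]
      refine ⟨fun i => ν i • B i, ?_, ?_, fun i => (ν i)⁻¹, fun i => inv_ne_zero (hνne i), ?_⟩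
      · intro i
        rw [Matrix.isUnit_iff_isUnit_det, Matrix.det_smul]
        exact (IsUnit.pow _ (isUnit_iff_ne_zero.mpr (hνne i))).mul
          ((Matrix.isUnit_iff_isUnit_det _).mp (hBunit i))
      · rw [applyLocal_smul, hBmap, hνprod, smul_smul, inv_mul_cancel₀ hc, one_smul]
      · intro i
        have key : h i * ((h i)⁻¹ * (A i * g i)) * (g i)⁻¹ = A i := by
          rw [← Matrix.mul_assoc, Matrix.mul_nonsing_inv _ (hhd i), Matrix.one_mul,
            Matrix.mul_assoc, Matrix.mul_nonsing_inv _ (hgd i), Matrix.mul_one]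
        rw [Matrix.mul_smul, Matrix.smul_mul, smul_smul, inv_mul_cancel₀ (hνne i), one_smul]
        exact key.symm
  · -- degenerate case: some d i is zero, so all are and everything is trivial
    push_neg at hpos
    obtain ⟨i0, hi0⟩ := hpos
    have hd0 : d i0 = 0 := Nat.le_zero.mp hi0
    have hE : IsEmpty (∀ j, Fin (d j)) :=
      ⟨fun x => absurd (x i0).isLt (by omega)⟩
    have hred0 : ∀ j, reduced Ψs j = 0 := by
      intro j
      ext a b
      simp [reduced, Finset.univ_eq_empty]
    have hsub : ∀ j, Subsingleton (Matrix (Fin (d j)) (Fin (d j)) ℂ) := by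
      intro j
      have h01 : (0 : Matrix (Fin (d j)) (Fin (d j)) ℂ) = 1 :=
        isUnit_zero_iff.mp (hred0 j ▸ hfull j)
      exact subsingleton_of_zero_eq_one h01
    refine ⟨fun i => 1, fun i => isUnit_one, ?_, fun i => 1, fun i => one_ne_zero, ?_⟩
    · funext x
      exact (hE.false x).elim
    · intro i
      have := hsub i
      exact Subsingleton.elim _ _
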